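/- Let Γ be a stable graph whose underlying graph is a tree (i.e. h¹(Γ) = 0), with legs carrying integers m̃₁,...,m̃_n satisfying Σ m̃_i = 2g − 2 + n, and with vertex conditions Σ_{h↦v} w(h) = 2g(v) − 2 + n(v) and edge conditions w(h) + w(h′) = 0. Then there exists a unique admissible integer weighting w : H(Γ) → ℤ of Γ. -/

import Mathlib

open Finset

/-- Core lemma: on a "tree of edges" (fixed-point-free involution on `ES`,
connected on `VS`, `|ES| + 2 = 2|VS|`), for targets `t` summing to `0` there is
a unique `w` vanishing off `ES`, antisymmetric, with vertex sums `t`. -/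
lemma tree_core {H V : Type*} [Fintype H] [DecidableEq H] [Fintype V] [DecidableEq V]
    (vmap : H → V) (ι : H → H) (hι : ∀ h, ι (ι h) = h) :
    ∀ (n : ℕ) (VS : Finset V) (ES : Finset H) (t : V → ℤ),
      VS.card = n →
      (∀ h ∈ ES, ι h ∈ ES) →
      (∀ h ∈ ES, ι h ≠ h) →
      (∀ h ∈ ES, vmap h ∈ VS) →
      (∀ u ∈ VS, ∀ u' ∈ VS, Relation.ReflTransGen
        (fun x y => ∃ h ∈ ES, vmap h = x ∧ vmap (ι h) = y) u u') →
      ES.card + 2 = 2 * VS.card →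
      (∑ v ∈ VS, t v = 0) →
      ∃! w : H → ℤ,
        (∀ h ∉ ES, w h = 0) ∧
        (∀ h ∈ ES, w h + w (ι h) = 0) ∧
        (∀ v ∈ VS, ∑ h ∈ ES.filter (fun h => vmap h = v), w h = t v) := by
  intro n
  induction n using Nat.strong_induction_on with
  | _ n IH =>
  intro VS ES t hn hclos hne hv hconn hcard hts
  rcases Nat.lt_or_ge VS.card 2 with hsmall | hbig
  · -- base case: VS.card = 1, ES = ∅
    have hVS1 : VS.card = 1 := by omega
    have hES0 : ES = ∅ := by
      have : ES.card = 0 := by omega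
      exact Finset.card_eq_zero.mp this
    subst hES0
    refine ⟨0, ⟨fun h _ => rfl, fun h hh => absurd hh (by simp), ?_⟩, ?_⟩
    · intro v hvv
      obtain ⟨v₀, hv₀⟩ := Finset.card_eq_one.mp hVS1
      subst hv₀
      simp only [Finset.mem_singleton] at hvv
      subst hvv
      simpa using hts.symm
    · intro y ⟨hy0, _, _⟩
      funext h
      exact hy0 h (by simp)
  · -- inductive step: find a leaf v₀
    -- degrees
    have hdegsum : ∑ v ∈ VS, (ES.filter (fun h => vmap h = v)).card = ES.card :=
      (Finset.card_eq_sum_card_fiberwise hv).symm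
    have hdegpos : ∀ v ∈ VS, 1 ≤ (ES.filter (fun h => vmap h = v)).card := by
      intro v hvv
      obtain ⟨u', hu', hu'ne⟩ := Finset.exists_mem_ne hbig v
      rcases (hconn v hvv u' hu').cases_head with rfl | ⟨c, ⟨h, hhE, hhv, _⟩, _⟩
      · exact absurd rfl hu'ne
      · have : h ∈ ES.filter (fun h => vmap h = v) := Finset.mem_filter.mpr ⟨hhE, hhv⟩
        exact Finset.card_pos.mpr ⟨h, this⟩
    have hleaf : ∃ v₀ ∈ VS, (ES.filter (fun h => vmap h = v₀)).card = 1 := by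
      by_contra hno
      push_neg at hno
      have h2 : ∀ v ∈ VS, 2 ≤ (ES.filter (fun h => vmap h = v)).card := by
        intro v hvv
        have := hdegpos v hvv
        have := hno v hvv
        omega
      have : 2 * VS.card ≤ ES.card := by
        calc 2 * VS.card = ∑ _v ∈ VS, 2 := by rw [Finset.sum_const]; ring
        _ ≤ ∑ v ∈ VS, (ES.filter (fun h => vmap h = v)).card := Finset.sum_le_sum h2
        _ = ES.card := hdegsum
      omega
    obtain ⟨v₀, hv₀VS, hdeg1⟩ := hleaf
    obtain ⟨h₀, hh₀⟩ := Finset.card_eq_one.mp hdeg1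
    have hh₀mem : h₀ ∈ ES.filter (fun h => vmap h = v₀) := by rw [hh₀]; simp
    have hh₀E : h₀ ∈ ES := (Finset.mem_filter.mp hh₀mem).1
    have hh₀v : vmap h₀ = v₀ := (Finset.mem_filter.mp hh₀mem).2
    have hfib : ∀ h ∈ ES, vmap h = v₀ → h = h₀ := by
      intro h hE hvh
      have : h ∈ ES.filter (fun h => vmap h = v₀) := Finset.mem_filter.mpr ⟨hE, hvh⟩
      rw [hh₀] at this; simpa using this
    have hιh₀E : ι h₀ ∈ ES := hclos h₀ hh₀E
    have hιh₀ne : ι h₀ ≠ h₀ := hne h₀ hh₀E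
    set v₁ := vmap (ι h₀) with hv₁def
    have hv₁VS : v₁ ∈ VS := hv _ hιh₀E
    have hv₁ne : v₁ ≠ v₀ := by
      intro hcon
      exact hιh₀ne (hfib _ hιh₀E hcon)
    -- new data
    set VS' := VS.erase v₀ with hVS'
    set ES' := (ES.erase h₀).erase (ι h₀) with hES'
    have hES'sub : ES' ⊆ ES := (Finset.erase_subset _ _).trans (Finset.erase_subset _ _)
    have hES'mem : ∀ h, h ∈ ES' ↔ h ∈ ES ∧ h ≠ h₀ ∧ h ≠ ι h₀ := by
      intro h
      simp only [hES', Finset.mem_erase]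
      tauto
    have hvES' : ∀ h ∈ ES', vmap h ≠ v₀ := by
      intro h hh hcon
      obtain ⟨hE, hne1, _⟩ := (hES'mem h).mp hh
      exact hne1 (hfib h hE hcon)
    set t' := Function.update t v₁ (t v₁ + t v₀) with ht'
    -- verify hypotheses for IH
    have hVS'card : VS'.card = VS.card - 1 := Finset.card_erase_of_mem hv₀VS
    have hlt : VS'.card < n := by omega
    have hclos' : ∀ h ∈ ES', ι h ∈ ES' := by
      intro h hh
      obtain ⟨hE, hne1, hne2⟩ := (hES'mem h).mp hh
      refine (hES'mem (ι h)).mpr ⟨hclos h hE, ?_, ?_⟩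
      · intro hcon; exact hne2 (by rw [← hcon, hι])
      · intro hcon; apply hne1; have := congrArg ι hcon; rwa [hι, hι] at this
    have hne' : ∀ h ∈ ES', ι h ≠ h := fun h hh => hne h (hES'sub hh)
    have hv' : ∀ h ∈ ES', vmap h ∈ VS' := by
      intro h hh
      exact Finset.mem_erase.mpr ⟨hvES' h hh, hv h (hES'sub hh)⟩
    -- connectivity of the reduced graph
    have hQ : ∀ a b : V, Relation.ReflTransGen
        (fun x y => ∃ h ∈ ES, vmap h = x ∧ vmap (ι h) = y) a b → b ≠ v₀ →
        Relation.ReflTransGen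
          (fun x y => ∃ h ∈ ES', vmap h = x ∧ vmap (ι h) = y)
          (if a = v₀ then v₁ else a) b := by
      intro a b hab hb
      induction hab using Relation.ReflTransGen.head_induction_on with
      | refl => rw [if_neg hb]
      | head hstep htail ih =>
        rename_i a' c'
        obtain ⟨h, hE, hva, hvc⟩ := hstep
        by_cases ha : a' = v₀
        · -- step from v₀ must use h₀, goes to v₁
          have hhh₀ : h = h₀ := hfib h hE (hva.trans (by rw [ha]))
          have hc : c' = v₁ := by rw [← hvc, hhh₀]
          rw [if_pos ha, ← hc]
          rw [if_neg (by rw [hc]; exact hv₁ne)] at ih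
          exact ih
        · rw [if_neg ha]
          by_cases hcv : c' = v₀
          · -- step into v₀ must come via ι h₀, i.e. from v₁
            have : ι h = h₀ := hfib (ι h) (hclos h hE) (hvc.trans (by rw [hcv]))
            have hh : h = ι h₀ := by rw [← this, hι]
            have hav₁ : a' = v₁ := by rw [← hva, hh]
            rw [if_pos hcv] at ih
            rw [hav₁]; exact ih
          · rw [if_neg hcv] at ih
            refine Relation.ReflTransGen.head ⟨h, ?_, hva, hvc⟩ ih
            refine (hES'mem h).mpr ⟨hE, ?_, ?_⟩
            · intro hcon; exact ha (by rw [← hva, hcon, hh₀v])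
            · intro hcon; exact hcv (by rw [← hvc, hcon, hι, hh₀v])
    have hconn' : ∀ u ∈ VS', ∀ u' ∈ VS', Relation.ReflTransGen
        (fun x y => ∃ h ∈ ES', vmap h = x ∧ vmap (ι h) = y) u u' := by
      intro u hu u' hu'
      have hune : u ≠ v₀ := (Finset.mem_erase.mp hu).1
      have hu'ne : u' ≠ v₀ := (Finset.mem_erase.mp hu').1
      have := hQ u u' (hconn u ((Finset.mem_erase.mp hu).2) u' ((Finset.mem_erase.mp hu').2)) hu'ne
      rwa [if_neg hune] at this
    have hES'card : ES'.card + 2 = ES.card := by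
      have h1 : ι h₀ ∈ ES.erase h₀ := Finset.mem_erase.mpr ⟨hιh₀ne, hιh₀E⟩
      have := Finset.card_erase_of_mem h1
      have := Finset.card_erase_of_mem hh₀E
      have : 1 ≤ ES.card := Finset.card_pos.mpr ⟨h₀, hh₀E⟩
      have h2 : (ES.erase h₀).card = ES.card - 1 := Finset.card_erase_of_mem hh₀E
      have h3 : ES'.card = (ES.erase h₀).card - 1 := Finset.card_erase_of_mem h1
      have h4 : 1 ≤ (ES.erase h₀).card := Finset.card_pos.mpr ⟨ι h₀, h1⟩
      omega
    have hcard' : ES'.card + 2 = 2 * VS'.card := by omega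
    have hv₁VS' : v₁ ∈ VS' := Finset.mem_erase.mpr ⟨hv₁ne, hv₁VS⟩
    have hts' : ∑ v ∈ VS', t' v = 0 := by
      have hsplit : ∑ v ∈ VS', t' v
          = t' v₁ + ∑ v ∈ VS'.erase v₁, t' v := (Finset.add_sum_erase _ _ hv₁VS').symm
      have h1 : ∀ v ∈ VS'.erase v₁, t' v = t v := by
        intro v hvv
        exact Function.update_of_ne (Finset.mem_erase.mp hvv).1 _ _
      have h2 : t' v₁ = t v₁ + t v₀ := Function.update_self _ _ _
      have h3 : ∑ v ∈ VS, t v = t v₀ + (t v₁ + ∑ v ∈ VS'.erase v₁, t v) := by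
        rw [← Finset.add_sum_erase _ _ hv₀VS, ← Finset.add_sum_erase _ _ hv₁VS']
      rw [hsplit, h2, Finset.sum_congr rfl h1]
      rw [h3] at hts
      linarith
    obtain ⟨w', ⟨hw'0, hw'a, hw'v⟩, hw'u⟩ :=
      IH VS'.card hlt VS' ES' t' rfl hclos' hne' hv' hconn' hcard' hts'
    -- fibers relations
    have hfibv₀ : ES.filter (fun h => vmap h = v₀) = {h₀} := hh₀
    have hfibeq : ∀ v, v ≠ v₀ → v ≠ v₁ →
        ES'.filter (fun h => vmap h = v) = ES.filter (fun h => vmap h = v) := by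
      intro v hne0 hne1
      ext h
      simp only [Finset.mem_filter, hES'mem]
      constructor
      · rintro ⟨⟨hE, _, _⟩, hvh⟩; exact ⟨hE, hvh⟩
      · rintro ⟨hE, hvh⟩
        refine ⟨⟨hE, ?_, ?_⟩, hvh⟩
        · rintro rfl; exact hne0 (by rw [← hvh, hh₀v])
        · rintro rfl; exact hne1 hvh.symm
    have hfibv₁ : ES.filter (fun h => vmap h = v₁)
        = insert (ι h₀) (ES'.filter (fun h => vmap h = v₁)) := by
      ext h
      simp only [Finset.mem_filter, Finset.mem_insert, hES'mem]
      constructor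
      · rintro ⟨hE, hvh⟩
        by_cases hh : h = ι h₀
        · exact Or.inl hh
        · refine Or.inr ⟨⟨hE, ?_, hh⟩, hvh⟩
          rintro rfl
          exact hv₁ne (show v₁ = v₀ by rw [← hvh, hh₀v])
      · rintro (rfl | ⟨⟨hE, _, _⟩, hvh⟩)
        · exact ⟨hιh₀E, rfl⟩
        · exact ⟨hE, hvh⟩
    have hιh₀notES' : ι h₀ ∉ ES'.filter (fun h => vmap h = v₁) := by
      simp only [Finset.mem_filter, hES'mem]
      rintro ⟨⟨_, _, hcon⟩, _⟩; exact hcon rfl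
    -- define w
    set w : H → ℤ := fun h => if h = h₀ then t v₀ else if h = ι h₀ then -t v₀ else w' h
      with hwdef
    have hwh₀ : w h₀ = t v₀ := by simp [hwdef]
    have hwιh₀ : w (ι h₀) = -t v₀ := by
      simp [hwdef, hιh₀ne]
    have hwother : ∀ h, h ≠ h₀ → h ≠ ι h₀ → w h = w' h := by
      intro h h1 h2; simp only [hwdef]; rw [if_neg h1, if_neg h2]
    have hwES' : ∀ h ∈ ES', w h = w' h := by
      intro h hh
      obtain ⟨_, h1, h2⟩ := (hES'mem h).mp hh
      exact hwother h h1 h2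
    have hwP : (∀ h ∉ ES, w h = 0) ∧ (∀ h ∈ ES, w h + w (ι h) = 0) ∧
        (∀ v ∈ VS, ∑ h ∈ ES.filter (fun h => vmap h = v), w h = t v) := by
      refine ⟨?_, ?_, ?_⟩
      · intro h hh
        have h1 : h ≠ h₀ := fun hcon => hh (hcon ▸ hh₀E)
        have h2 : h ≠ ι h₀ := fun hcon => hh (hcon ▸ hιh₀E)
        rw [hwother h h1 h2]
        exact hw'0 h (fun hcon => hh (hES'sub hcon))
      · intro h hh
        by_cases h1 : h = h₀
        · subst h1; rw [hwh₀, hwιh₀]; ring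
        by_cases h2 : h = ι h₀
        · subst h2; rw [hwιh₀, hι, hwh₀]; ring
        · have hhE' : h ∈ ES' := (hES'mem h).mpr ⟨hh, h1, h2⟩
          rw [hwES' h hhE', hwES' (ι h) (hclos' h hhE')]
          exact hw'a h hhE'
      · intro v hvv
        by_cases hv0 : v = v₀
        · subst hv0
          rw [hfibv₀, Finset.sum_singleton, hwh₀]
        by_cases hv1 : v = v₁
        · subst hv1
          rw [hfibv₁, Finset.sum_insert hιh₀notES', hwιh₀,
            Finset.sum_congr rfl (fun h hh => hwES' h (Finset.mem_filter.mp hh).1),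
            hw'v v₁ hv₁VS']
          simp only [ht', Function.update_self]
          ring
        · rw [← hfibeq v hv0 hv1,
            Finset.sum_congr rfl (fun h hh => hwES' h (Finset.mem_filter.mp hh).1),
            hw'v v (Finset.mem_erase.mpr ⟨hv0, hvv⟩)]
          simp only [ht']
          rw [Function.update_of_ne hv1]
    refine ⟨w, hwP, ?_⟩
    -- uniqueness
    intro y ⟨hy0, hya, hyv⟩
    have hyh₀ : y h₀ = t v₀ := by
      have := hyv v₀ hv₀VS
      rwa [hfibv₀, Finset.sum_singleton] at this
    have hyιh₀ : y (ι h₀) = -t v₀ := by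
      have := hya h₀ hh₀E
      linarith [hyh₀]
    set y' : H → ℤ := fun h => if h = h₀ ∨ h = ι h₀ then 0 else y h with hy'def
    have hy'eq : ∀ h ∈ ES', y' h = y h := by
      intro h hh
      obtain ⟨_, h1, h2⟩ := (hES'mem h).mp hh
      simp only [hy'def]
      rw [if_neg (by tauto)]
    have hy'P : (∀ h ∉ ES', y' h = 0) ∧ (∀ h ∈ ES', y' h + y' (ι h) = 0) ∧
        (∀ v ∈ VS', ∑ h ∈ ES'.filter (fun h => vmap h = v), y' h = t' v) := by
      refine ⟨?_, ?_, ?_⟩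
      · intro h hh
        simp only [hy'def]
        by_cases hc : h = h₀ ∨ h = ι h₀
        · rw [if_pos hc]
        · rw [if_neg hc]
          push_neg at hc
          exact hy0 h (fun hcon => hh ((hES'mem h).mpr ⟨hcon, hc.1, hc.2⟩))
      · intro h hh
        rw [hy'eq h hh, hy'eq (ι h) (hclos' h hh)]
        exact hya h (hES'sub hh)
      · intro v hvv
        have hvne0 : v ≠ v₀ := (Finset.mem_erase.mp hvv).1
        by_cases hv1 : v = v₁
        · subst hv1
          have := hyv v₁ hv₁VS
          rw [hfibv₁, Finset.sum_insert hιh₀notES', hyιh₀] at this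
          rw [Finset.sum_congr rfl (fun h hh => hy'eq h (Finset.mem_filter.mp hh).1)]
          simp only [ht', Function.update_self]
          linarith
        · have h5 := hyv v (Finset.mem_erase.mp hvv).2
          rw [Finset.sum_congr rfl (fun h hh => hy'eq h (Finset.mem_filter.mp hh).1),
            hfibeq v hvne0 hv1, h5]
          exact (Function.update_of_ne hv1 _ _).symm
    have hy'w' : y' = w' := hw'u y' hy'P
    funext h
    by_cases h1 : h = h₀
    · subst h1; rw [hyh₀, hwh₀]
    by_cases h2 : h = ι h₀
    · subst h2; rw [hyιh₀, hwιh₀]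
    by_cases hE : h ∈ ES
    · have hhE' : h ∈ ES' := (hES'mem h).mpr ⟨hE, h1, h2⟩
      rw [hwother h h1 h2, ← hy'w', hy'eq h hhE']
    · rw [hy0 h hE, hwdef]
      simp only
      rw [if_neg h1, if_neg h2]
      exact (hw'0 h (fun hcon => hE (hES'sub hcon))).symm

/-- On a stable graph which is a tree (connected, with `h¹ = 0`, i.e.
`#{non-fixed half-edges} + 2 = 2|V|`), given leg values `m̃` whose total equals
`2g − 2 + n` (where `g = Σ_v g(v)` and `n` is the number of legs), there is a
unique admissible integer weighting of the half-edges. -/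
theorem tree_admissible_weighting_exists_unique
    (H V : Type*) [Fintype H] [DecidableEq H] [Fintype V] [DecidableEq V]
    (vmap : H → V) (ι : H → H) (hι : ∀ h, ι (ι h) = h)
    (hconn : ∀ u u' : V, Relation.ReflTransGen
      (fun x y => ∃ h, ι h ≠ h ∧ vmap h = x ∧ vmap (ι h) = y) u u')
    (htree : (Finset.univ.filter (fun h : H => ι h ≠ h)).card + 2
      = 2 * Fintype.card V)
    (m : H → ℤ) (gv : V → ℤ) (hgv : ∀ v, 0 ≤ gv v)
    (hsum : ∑ h ∈ Finset.univ.filter (fun h : H => ι h = h), m h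
      = 2 * (∑ v, gv v) - 2 + (Finset.univ.filter (fun h : H => ι h = h)).card) :
    ∃! w : H → ℤ,
      (∀ h, ι h = h → w h = m h) ∧
      (∀ h, ι h ≠ h → w h + w (ι h) = 0) ∧
      (∀ u : V, ∑ h ∈ Finset.univ.filter (fun h => vmap h = u), w h
        = 2 * gv u - 2
          + (Finset.univ.filter (fun h => vmap h = u)).card) := by
  classical
  set ES : Finset H := Finset.univ.filter (fun h => ι h ≠ h) with hES
  set L : Finset H := Finset.univ.filter (fun h : H => ι h = h) with hL
  have hESmem : ∀ h : H, h ∈ ES ↔ ι h ≠ h := by intro h; simp [hES]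
  have hLmem : ∀ h : H, h ∈ L ↔ ι h = h := by intro h; simp [hL]
  -- leg contribution at each vertex
  set lv : V → ℤ := fun v => ∑ h ∈ L.filter (fun h => vmap h = v), m h with hlv
  set t : V → ℤ := fun v => 2 * gv v - 2
      + (Finset.univ.filter (fun h => vmap h = v)).card - lv v with ht
  -- splitting of half-edges at a vertex
  have hsplit : ∀ (u : V) (f : H → ℤ),
      ∑ h ∈ Finset.univ.filter (fun h => vmap h = u), f h
        = (∑ h ∈ L.filter (fun h => vmap h = u), f h)
          + ∑ h ∈ ES.filter (fun h => vmap h = u), f h := by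
    intro u f
    rw [← Finset.sum_union]
    · congr 1
      ext h
      simp only [Finset.mem_filter, Finset.mem_union, hES, hL, Finset.mem_univ,
        true_and]
      tauto
    · rw [Finset.disjoint_left]
      intro h hh1 hh2
      simp only [Finset.mem_filter, hES, hL, Finset.mem_univ, true_and] at hh1 hh2
      exact hh2.1 hh1.1
  -- hypotheses for the core lemma
  have hclos : ∀ h ∈ ES, ι h ∈ ES := by
    intro h hh
    rw [hESmem] at hh ⊢
    rw [hι]
    exact fun hcon => hh hcon.symm
  have hne : ∀ h ∈ ES, ι h ≠ h := fun h hh => (hESmem h).mp hh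
  have hv : ∀ h ∈ ES, vmap h ∈ (Finset.univ : Finset V) := fun _ _ => Finset.mem_univ _
  have hconn' : ∀ u ∈ (Finset.univ : Finset V), ∀ u' ∈ (Finset.univ : Finset V),
      Relation.ReflTransGen (fun x y => ∃ h ∈ ES, vmap h = x ∧ vmap (ι h) = y) u u' := by
    intro u _ u' _
    refine Relation.ReflTransGen.mono ?_ u u' (hconn u u')
    rintro x y ⟨h, hne1, hx, hy⟩
    exact ⟨h, (hESmem h).mpr hne1, hx, hy⟩
  have hcard : ES.card + 2 = 2 * (Finset.univ : Finset V).card := by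
    rw [Finset.card_univ]; exact htree
  have hts : ∑ v ∈ (Finset.univ : Finset V), t v = 0 := by
    have h1 : ∑ v : V, ((Finset.univ.filter (fun h => vmap h = v)).card : ℤ)
        = (Fintype.card H : ℤ) := by
      have := Finset.card_eq_sum_card_fiberwise
        (f := vmap) (s := (Finset.univ : Finset H)) (t := (Finset.univ : Finset V))
        (fun h _ => Finset.mem_univ _)
      rw [Finset.card_univ] at this
      exact_mod_cast (congrArg (Nat.cast : ℕ → ℤ) this).symm
    have h2 : ∑ v : V, lv v = ∑ h ∈ L, m h := by
      rw [hlv]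
      exact (Finset.sum_fiberwise_of_maps_to (fun h _ => Finset.mem_univ (vmap h)) m)
    have h3 : (Fintype.card H : ℤ) = ES.card + L.card := by
      have := Finset.card_filter_add_card_filter_not
        (s := (Finset.univ : Finset H)) (p := fun h => ι h = h)
      have h4 : (Finset.univ.filter (fun h : H => ¬ ι h = h)) = ES := by
        rw [hES]
      rw [Finset.card_univ] at this
      push_cast [← this]
      ring
    simp only [ht, Finset.sum_sub_distrib, Finset.sum_add_distrib]
    rw [h1, h2, hsum, h3]
    have h5 : ∑ _v : V, (2:ℤ) = 2 * Fintype.card V := by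
      rw [Finset.sum_const, Finset.card_univ]; push_cast; ring
    have h6 : (ES.card : ℤ) + 2 = 2 * Fintype.card V := by exact_mod_cast htree
    have h7 : ∑ v : V, 2 * gv v = 2 * ∑ v, gv v := by
      rw [Finset.mul_sum]
    rw [h7]
    push_cast
    linarith [h6, h5]
  obtain ⟨w', ⟨hw'0, hw'a, hw'v⟩, hw'u⟩ :=
    tree_core vmap ι hι (Finset.univ : Finset V).card Finset.univ ES t rfl
      hclos hne hv hconn' hcard hts
  set w : H → ℤ := fun h => if ι h = h then m h else w' h with hw
  refine ⟨w, ⟨?_, ?_, ?_⟩, ?_⟩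
  · intro h hh; simp [hw, hh]
  · intro h hh
    have hιh : ¬ ι (ι h) = ι h := by rw [hι]; exact fun hcon => hh hcon.symm
    simp only [hw, if_neg hh, if_neg hιh]
    exact hw'a h ((hESmem h).mpr hh)
  · intro u
    rw [hsplit u w]
    have e1 : ∑ h ∈ L.filter (fun h => vmap h = u), w h = lv u := by
      refine Finset.sum_congr rfl ?_
      intro h hh
      have : ι h = h := (hLmem h).mp (Finset.mem_filter.mp hh).1
      simp [hw, this]
    have e2 : ∑ h ∈ ES.filter (fun h => vmap h = u), w h
        = ∑ h ∈ ES.filter (fun h => vmap h = u), w' h := by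
      refine Finset.sum_congr rfl ?_
      intro h hh
      have : ¬ ι h = h := (hESmem h).mp (Finset.mem_filter.mp hh).1
      simp [hw, this]
    rw [e1, e2, hw'v u (Finset.mem_univ u)]
    simp only [ht]
    ring
  · intro y ⟨hy1, hy2, hy3⟩
    set y' : H → ℤ := fun h => if ι h = h then 0 else y h with hy'
    have hy'ES : ∀ h ∈ ES, y' h = y h := by
      intro h hh
      simp [hy', (hESmem h).mp hh]
    have : y' = w' := by
      refine hw'u y' ⟨?_, ?_, ?_⟩
      · intro h hh
        have : ι h = h := by by_contra hcon; exact hh ((hESmem h).mpr hcon)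
        simp [hy', this]
      · intro h hh
        rw [hy'ES h hh, hy'ES (ι h) (hclos h hh)]
        exact hy2 h ((hESmem h).mp hh)
      · intro v _
        have := hy3 v
        rw [hsplit v y] at this
        have e1 : ∑ h ∈ L.filter (fun h => vmap h = v), y h = lv v := by
          refine Finset.sum_congr rfl ?_
          intro h hh
          exact hy1 h ((hLmem h).mp (Finset.mem_filter.mp hh).1)
        rw [e1] at this
        rw [Finset.sum_congr rfl (fun h hh => hy'ES h (Finset.mem_filter.mp hh).1)]
        simp only [ht]
        linarith
    funext h
    by_cases hh : ι h = h
    · rw [hy1 h hh]; simp [hw, hh]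
    · have h1 : y h = y' h := by simp [hy', hh]
      rw [h1, this]
      simp [hw, hh]
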